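/- Let d ≥ 1 and t ∈ ℕ, and let {(K_i, k_i)}_{i∈I} be a finite family with K_i in the unitary group U(d) of d×d complex matrices and real weights k_i, such that ∑_i k_i · K_i^{⊗t} ⊗ (K_i^*)^{⊗t} equals the Bochner integral ∫_{U(d)} U^{⊗t} ⊗ (U^*)^{⊗t} dμ with respect to the normalized (probability) Haar measure μ on U(d). For each i choose z_i ∈ ℂ with z_i^d = det K_i and set W_i = z_i⁻¹ • K_i. Then each W_i lies in the special unitary group SU(d), and ∑_i k_i · W_i^{⊗t} ⊗ (W_i^*)^{⊗t} equals ∫_{SU(d)} W^{⊗t} ⊗ (W^*)^{⊗t} dν with respect to the normalized (probability) Haar measure ν on SU(d). -/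

import Mathlib

open Matrix MeasureTheory
open scoped Kronecker

set_option synthInstance.maxHeartbeats 1000000
set_option maxHeartbeats 1600000


/-- Matrices inherit the (Borel) product measurable structure of functions. -/
noncomputable instance matrixMeasurableSpace (m n : Type*) : MeasurableSpace (Matrix m n ℂ) :=
  inferInstanceAs (MeasurableSpace (m → n → ℂ))

/-- The special unitary group is a group (inverse given by the conjugate transpose). -/
noncomputable instance specialUnitaryGroup.group {n : Type*} [DecidableEq n] [Fintype n] :
    Group ↥(Matrix.specialUnitaryGroup n ℂ) :=
  { (inferInstance : Monoid ↥(Matrix.specialUnitaryGroup n ℂ)) with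
    inv := fun A => ⟨star A.1, by
      obtain ⟨hu, hd⟩ := Matrix.mem_specialUnitaryGroup_iff.mp A.2
      refine Matrix.mem_specialUnitaryGroup_iff.mpr ⟨Unitary.star_mem hu, ?_⟩
      rw [Matrix.star_eq_conjTranspose, Matrix.det_conjTranspose, hd, star_one]⟩
    inv_mul_cancel := fun A => Subtype.ext A.2.1.1 }

/-- The `t`-fold Kronecker power of a `d × d` complex matrix:
`L^{⊗t}(i,j) = ∏_{s<t} L (i s) (j s)`. -/
noncomputable def kroneckerPow {d : ℕ} (t : ℕ) (L : Matrix (Fin d) (Fin d) ℂ) :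
    Matrix (Fin t → Fin d) (Fin t → Fin d) ℂ :=
  fun i j => ∏ s : Fin t, L (i s) (j s)

/-- `L^{⊗t} ⊗ (L^*)^{⊗t}`, the matrix averaged in the definition of a `t`-design. -/
noncomputable def designMat {d : ℕ} (t : ℕ) (L : Matrix (Fin d) (Fin d) ℂ) :
    Matrix ((Fin t → Fin d) × (Fin t → Fin d)) ((Fin t → Fin d) × (Fin t → Fin d)) ℂ :=
  kroneckerPow t L ⊗ₖ kroneckerPow t (L.map (starRingEnd ℂ))

-- Borel structure
instance matrixBorel (m n : Type*) [Countable m] [Countable n] : BorelSpace (Matrix m n ℂ) :=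
  inferInstanceAs (BorelSpace (m → n → ℂ))

variable {d : ℕ}

instance : BorelSpace ↥(Matrix.unitaryGroup (Fin d) ℂ) :=
  inferInstanceAs (BorelSpace (Matrix.unitaryGroup (Fin d) ℂ : Set (Matrix (Fin d) (Fin d) ℂ)))
instance : BorelSpace ↥(Matrix.specialUnitaryGroup (Fin d) ℂ) :=
  inferInstanceAs
    (BorelSpace (Matrix.specialUnitaryGroup (Fin d) ℂ : Set (Matrix (Fin d) (Fin d) ℂ)))
instance : BorelSpace ↥(unitary ℂ) :=
  inferInstanceAs (BorelSpace (unitary ℂ : Set ℂ))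

-- Topological groups
instance : IsTopologicalGroup ↥(Matrix.unitaryGroup (Fin d) ℂ) where
  continuous_mul := ((continuous_subtype_val.comp continuous_fst).matrix_mul
      (continuous_subtype_val.comp continuous_snd)).subtype_mk _
  continuous_inv := (continuous_subtype_val.matrix_conjTranspose).subtype_mk _

instance : IsTopologicalGroup ↥(Matrix.specialUnitaryGroup (Fin d) ℂ) where
  continuous_mul := ((continuous_subtype_val.comp continuous_fst).matrix_mul
      (continuous_subtype_val.comp continuous_snd)).subtype_mk _
  continuous_inv := (continuous_subtype_val.matrix_conjTranspose).subtype_mk _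

instance : IsTopologicalGroup ↥(unitary ℂ) where
  continuous_mul := ((continuous_subtype_val.comp continuous_fst).mul
      (continuous_subtype_val.comp continuous_snd)).subtype_mk _
  continuous_inv := (continuous_star.comp continuous_subtype_val).subtype_mk _
variable {d : ℕ}

lemma entry_norm_le (A : Matrix (Fin d) (Fin d) ℂ) (hA : A ∈ Matrix.unitaryGroup (Fin d) ℂ)
    (i j : Fin d) : ‖A i j‖ ≤ 1 := by
  have h1 : (A * star A) i i = 1 := by
    rw [Matrix.mem_unitaryGroup_iff.mp hA]; simp
  rw [Matrix.mul_apply] at h1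
  have h2 : ∀ l, A i l * star A l i = (Complex.normSq (A i l) : ℂ) := by
    intro l
    rw [Matrix.star_eq_conjTranspose, Matrix.conjTranspose_apply]
    exact Complex.mul_conj _
  simp only [h2] at h1
  have h3 : ∑ l, Complex.normSq (A i l) = 1 := by
    have := congrArg Complex.re h1
    simpa using this
  have h4 : Complex.normSq (A i j) ≤ 1 := by
    rw [← h3]
    exact Finset.single_le_sum (fun l _ => Complex.normSq_nonneg _) (Finset.mem_univ j)
  calc ‖A i j‖ = Real.sqrt (Complex.normSq (A i j)) := by
        rw [Complex.norm_def]
    _ ≤ Real.sqrt 1 := Real.sqrt_le_sqrt h4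
    _ = 1 := Real.sqrt_one

lemma isClosed_unitaryGroup :
    IsClosed (Matrix.unitaryGroup (Fin d) ℂ : Set (Matrix (Fin d) (Fin d) ℂ)) := by
  have : (Matrix.unitaryGroup (Fin d) ℂ : Set (Matrix (Fin d) (Fin d) ℂ)) =
      (fun A : Matrix (Fin d) (Fin d) ℂ => A * Aᴴ) ⁻¹' {1} := by
    ext A
    simp [Matrix.mem_unitaryGroup_iff, Matrix.star_eq_conjTranspose]
  rw [this]
  exact IsClosed.preimage (continuous_id.matrix_mul continuous_id.matrix_conjTranspose)
    isClosed_singleton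

lemma isCompact_unitaryGroup :
    IsCompact (Matrix.unitaryGroup (Fin d) ℂ : Set (Matrix (Fin d) (Fin d) ℂ)) := by
  have hsub : (Matrix.unitaryGroup (Fin d) ℂ : Set (Matrix (Fin d) (Fin d) ℂ)) ⊆
      Set.univ.pi (fun _ : Fin d => Set.univ.pi fun _ : Fin d => Metric.closedBall (0 : ℂ) 1) := by
    intro A hA
    refine Set.mem_univ_pi.mpr ?_
    intro i
    rw [Set.mem_univ_pi]
    intro j
    rw [Metric.mem_closedBall, dist_zero_right]
    exact entry_norm_le A hA i j
  exact IsCompact.of_isClosed_subset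
    (isCompact_univ_pi fun _ => isCompact_univ_pi fun _ => isCompact_closedBall 0 1)
    isClosed_unitaryGroup hsub

lemma isCompact_specialUnitaryGroup :
    IsCompact (Matrix.specialUnitaryGroup (Fin d) ℂ : Set (Matrix (Fin d) (Fin d) ℂ)) := by
  refine isCompact_unitaryGroup.of_isClosed_subset ?_ ?_
  · have : (Matrix.specialUnitaryGroup (Fin d) ℂ : Set (Matrix (Fin d) (Fin d) ℂ)) =
        (Matrix.unitaryGroup (Fin d) ℂ : Set (Matrix (Fin d) (Fin d) ℂ)) ∩
          ((fun A : Matrix (Fin d) (Fin d) ℂ => A.det) ⁻¹' {1}) := by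
      ext A
      constructor
      · intro h
        obtain ⟨h1, h2⟩ := Matrix.mem_specialUnitaryGroup_iff.mp h
        exact ⟨h1, h2⟩
      · rintro ⟨h1, h2⟩
        exact Matrix.mem_specialUnitaryGroup_iff.mpr ⟨h1, h2⟩
    rw [this]
    exact IsClosed.inter isClosed_unitaryGroup
      (IsClosed.preimage continuous_id.matrix_det isClosed_singleton)
  · intro A hA
    exact (Matrix.mem_specialUnitaryGroup_iff.mp hA).1

lemma isCompact_unitaryC : IsCompact (unitary ℂ : Set ℂ) := by
  have hclosed : IsClosed (unitary ℂ : Set ℂ) := by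
    have : (unitary ℂ : Set ℂ) =
        ((fun z : ℂ => star z * z) ⁻¹' {1}) ∩ ((fun z : ℂ => z * star z) ⁻¹' {1}) := by
      ext z; simp [Unitary.mem_iff]
    rw [this]
    exact IsClosed.inter
      (IsClosed.preimage (continuous_star.mul continuous_id) isClosed_singleton)
      (IsClosed.preimage (continuous_id.mul continuous_star) isClosed_singleton)
  have hsub : (unitary ℂ : Set ℂ) ⊆ Metric.closedBall 0 1 := by
    intro z hz
    rw [Metric.mem_closedBall, dist_zero_right]
    have h := (Unitary.mem_iff.mp hz).2
    have : (Complex.normSq z : ℂ) = 1 := by rw [← Complex.mul_conj]; exact h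
    have h2 : Complex.normSq z = 1 := by exact_mod_cast this
    rw [Complex.norm_def, h2, Real.sqrt_one]
  exact IsCompact.of_isClosed_subset (isCompact_closedBall 0 1) hclosed hsub

instance : CompactSpace ↥(Matrix.unitaryGroup (Fin d) ℂ) :=
  isCompact_iff_compactSpace.mp isCompact_unitaryGroup
instance : CompactSpace ↥(Matrix.specialUnitaryGroup (Fin d) ℂ) :=
  isCompact_iff_compactSpace.mp isCompact_specialUnitaryGroup
instance : CompactSpace ↥(unitary ℂ) :=
  isCompact_iff_compactSpace.mp isCompact_unitaryC
lemma designMat_apply {d : ℕ} (t : ℕ) (L : Matrix (Fin d) (Fin d) ℂ)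
    (p q : (Fin t → Fin d) × (Fin t → Fin d)) :
    designMat t L p q =
      (∏ s : Fin t, L (p.1 s) (q.1 s)) *
        ∏ s : Fin t, (starRingEnd ℂ) (L (p.2 s) (q.2 s)) := by
  simp [designMat, kroneckerPow, Matrix.kroneckerMap_apply, Matrix.map_apply]

lemma designMat_smul {d : ℕ} (t : ℕ) {c : ℂ} (hc : c * (starRingEnd ℂ) c = 1)
    (A : Matrix (Fin d) (Fin d) ℂ) : designMat t (c • A) = designMat t A := by
  funext p q
  rw [designMat_apply, designMat_apply]
  have h1 : ∀ (a b : Fin t → Fin d), ∏ s : Fin t, (c • A) (a s) (b s) =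
      c ^ t * ∏ s : Fin t, A (a s) (b s) := by
    intro a b
    simp only [Matrix.smul_apply, smul_eq_mul]
    rw [Finset.prod_mul_distrib, Finset.prod_const, Finset.card_univ, Fintype.card_fin]
  have h2 : ∏ s : Fin t, (starRingEnd ℂ) ((c • A) (p.2 s) (q.2 s)) =
      ((starRingEnd ℂ) c) ^ t * ∏ s : Fin t, (starRingEnd ℂ) (A (p.2 s) (q.2 s)) := by
    simp only [Matrix.smul_apply, smul_eq_mul, _root_.map_mul]
    rw [Finset.prod_mul_distrib, Finset.prod_const, Finset.card_univ, Fintype.card_fin]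
  rw [h1, h2]
  have : c ^ t * ((starRingEnd ℂ) c) ^ t = 1 := by
    rw [← mul_pow, hc, one_pow]
  calc c ^ t * (∏ s : Fin t, A (p.1 s) (q.1 s)) *
        (((starRingEnd ℂ) c) ^ t * ∏ s : Fin t, (starRingEnd ℂ) (A (p.2 s) (q.2 s))) =
      (c ^ t * ((starRingEnd ℂ) c) ^ t) * ((∏ s : Fin t, A (p.1 s) (q.1 s)) *
        ∏ s : Fin t, (starRingEnd ℂ) (A (p.2 s) (q.2 s))) := by ring
    _ = _ := by rw [this, one_mul]

lemma conj_root_one {d : ℕ} (hd : 1 ≤ d) {u w : ℂ} (hu : u ^ d = w)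
    (hw : w * (starRingEnd ℂ) w = 1) : u * (starRingEnd ℂ) u = 1 := by
  have key : (u * (starRingEnd ℂ) u) ^ d = 1 := by
    rw [mul_pow, ← map_pow, hu, hw]
  have hns : u * (starRingEnd ℂ) u = (Complex.normSq u : ℂ) := Complex.mul_conj u
  rw [hns] at key ⊢
  have hr : Complex.normSq u ^ d = 1 := by exact_mod_cast key
  have hnn : 0 ≤ Complex.normSq u := Complex.normSq_nonneg u
  have hd0 : d ≠ 0 := by omega
  have : Complex.normSq u = 1 := by
    rcases lt_trichotomy (Complex.normSq u) 1 with h | h | h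
    · have := pow_lt_one₀ hnn h hd0
      linarith
    · exact h
    · have := one_lt_pow₀ h hd0
      linarith
  rw [this, Complex.ofReal_one]

lemma det_conj_one {d : ℕ} {K : Matrix (Fin d) (Fin d) ℂ}
    (hK : K ∈ Matrix.unitaryGroup (Fin d) ℂ) :
    K.det * (starRingEnd ℂ) K.det = 1 := by
  have h := Matrix.mem_unitaryGroup_iff.mp hK
  have := congrArg Matrix.det h
  rw [Matrix.det_mul, Matrix.star_eq_conjTranspose, Matrix.det_conjTranspose,
    Matrix.det_one] at this
  exact this

section hom
variable {d : ℕ}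

lemma smul_mem_unitaryGroup {c : ℂ} (hc : c * (starRingEnd ℂ) c = 1)
    {A : Matrix (Fin d) (Fin d) ℂ} (hA : A ∈ Matrix.unitaryGroup (Fin d) ℂ) :
    c • A ∈ Matrix.unitaryGroup (Fin d) ℂ := by
  rw [Matrix.mem_unitaryGroup_iff]
  rw [star_smul, Matrix.smul_mul, Matrix.mul_smul, smul_smul,
    Matrix.mem_unitaryGroup_iff.mp hA]
  have : c * star c = 1 := hc
  rw [this, one_smul]

/-- The rescaling homomorphism `U(1) × SU(d) → U(d)`. -/
noncomputable def rescaleHom (d : ℕ) :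
    (↥(unitary ℂ) × ↥(Matrix.specialUnitaryGroup (Fin d) ℂ)) →*
      ↥(Matrix.unitaryGroup (Fin d) ℂ) where
  toFun x := ⟨(x.1 : ℂ) • (x.2 : Matrix (Fin d) (Fin d) ℂ),
    smul_mem_unitaryGroup (Unitary.mem_iff.mp x.1.2).2
      (Matrix.mem_specialUnitaryGroup_iff.mp x.2.2).1⟩
  map_one' := by
    apply Subtype.ext
    simp
  map_mul' x y := by
    apply Subtype.ext
    show ((x.1 : ℂ) * (y.1 : ℂ)) • ((x.2 : Matrix (Fin d) (Fin d) ℂ) *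
        (y.2 : Matrix (Fin d) (Fin d) ℂ)) =
      ((x.1 : ℂ) • (x.2 : Matrix (Fin d) (Fin d) ℂ)) *
        ((y.1 : ℂ) • (y.2 : Matrix (Fin d) (Fin d) ℂ))
    rw [Matrix.smul_mul, Matrix.mul_smul, smul_smul]

lemma rescaleHom_continuous : Continuous (rescaleHom d) := by
  apply Continuous.subtype_mk
  exact ((continuous_subtype_val.comp continuous_fst).smul
    (continuous_subtype_val.comp continuous_snd))

lemma rescaleHom_surjective (hd : 1 ≤ d) : Function.Surjective (rescaleHom d) := by
  intro U
  have hdet := det_conj_one U.2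
  obtain ⟨w, hw⟩ := IsAlgClosed.exists_pow_nat_eq ((U : Matrix (Fin d) (Fin d) ℂ).det)
    (show 0 < d by omega)
  have hw1 : w * (starRingEnd ℂ) w = 1 := conj_root_one hd hw hdet
  have hw0 : w ≠ 0 := by
    intro h
    rw [h, zero_mul] at hw1
    exact zero_ne_one hw1
  have hdet0 : (U : Matrix (Fin d) (Fin d) ℂ).det ≠ 0 := by
    intro h
    rw [h, zero_mul] at hdet
    exact zero_ne_one hdet
  have hinv : w⁻¹ * (starRingEnd ℂ) w⁻¹ = 1 := by
    rw [map_inv₀, ← mul_inv, hw1, inv_one]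
  refine ⟨⟨⟨w, Unitary.mem_iff.mpr ⟨by rw [mul_comm] at hw1; exact hw1, hw1⟩⟩,
    ⟨w⁻¹ • (U : Matrix (Fin d) (Fin d) ℂ), ?_⟩⟩, ?_⟩
  · rw [Matrix.mem_specialUnitaryGroup_iff]
    refine ⟨smul_mem_unitaryGroup hinv U.2, ?_⟩
    rw [Matrix.det_smul, Fintype.card_fin, inv_pow, hw]
    exact inv_mul_cancel₀ hdet0
  · apply Subtype.ext
    show w • (w⁻¹ • (U : Matrix (Fin d) (Fin d) ℂ)) = _
    rw [smul_smul, mul_inv_cancel₀ hw0, one_smul]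

lemma continuous_designMat_entry (t : ℕ) (p q : (Fin t → Fin d) × (Fin t → Fin d)) :
    Continuous fun L : Matrix (Fin d) (Fin d) ℂ => designMat t L p q := by
  simp only [designMat_apply]
  apply Continuous.mul
  · apply continuous_finset_prod
    intro s _
    exact (continuous_apply (q.1 s)).comp (continuous_apply (p.1 s))
  · apply continuous_finset_prod
    intro s _
    exact Complex.continuous_conj.comp
      ((continuous_apply (q.2 s)).comp (continuous_apply (p.2 s)))

end hom

/-- A unitary `t`-design `{(K_i, k_i)}` on `U(d)`, rescaled by `d`-th roots
`z_i` of the determinants (`W_i = z_i⁻¹ • K_i`), yields matrices in `SU(d)` forming a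
`t`-design on `SU(d)` (all integrals taken entrywise, w.r.t. normalized Haar measures). -/
theorem unitary_design_to_specialUnitary_design (d : ℕ) (hd : 1 ≤ d) (t : ℕ)
    {I : Type*} [Fintype I]
    (K : I → ↥(Matrix.unitaryGroup (Fin d) ℂ)) (k : I → ℝ)
    (μ : Measure ↥(Matrix.unitaryGroup (Fin d) ℂ))
    [μ.IsHaarMeasure] [IsProbabilityMeasure μ]
    (ν : Measure ↥(Matrix.specialUnitaryGroup (Fin d) ℂ))
    [ν.IsHaarMeasure] [IsProbabilityMeasure ν]
    (hdesign : ∀ p q : (Fin t → Fin d) × (Fin t → Fin d),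
      (∑ i : I, (k i : ℂ) • designMat t (K i : Matrix (Fin d) (Fin d) ℂ)) p q =
        ∫ U : ↥(Matrix.unitaryGroup (Fin d) ℂ),
          designMat t (U : Matrix (Fin d) (Fin d) ℂ) p q ∂μ)
    (z : I → ℂ) (hz : ∀ i, z i ^ d = (K i : Matrix (Fin d) (Fin d) ℂ).det)
    (W : I → Matrix (Fin d) (Fin d) ℂ)
    (hW : ∀ i, W i = (z i)⁻¹ • (K i : Matrix (Fin d) (Fin d) ℂ)) :
    (∀ i, W i ∈ Matrix.specialUnitaryGroup (Fin d) ℂ) ∧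
      ∀ p q : (Fin t → Fin d) × (Fin t → Fin d),
        (∑ i : I, (k i : ℂ) • designMat t (W i)) p q =
          ∫ V : ↥(Matrix.specialUnitaryGroup (Fin d) ℂ),
            designMat t (V : Matrix (Fin d) (Fin d) ℂ) p q ∂ν := by
  have hzc : ∀ i, z i * (starRingEnd ℂ) (z i) = 1 := fun i =>
    conj_root_one hd (hz i) (det_conj_one (K i).2)
  have hzc' : ∀ i, (z i)⁻¹ * (starRingEnd ℂ) (z i)⁻¹ = 1 := fun i => by
    rw [map_inv₀, ← mul_inv, hzc i, inv_one]
  have hdet0 : ∀ i, (K i : Matrix (Fin d) (Fin d) ℂ).det ≠ 0 := by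
    intro i h
    have := det_conj_one (K i).2
    rw [h, zero_mul] at this
    exact zero_ne_one this
  have hmem : ∀ i, W i ∈ Matrix.specialUnitaryGroup (Fin d) ℂ := by
    intro i
    rw [hW i, Matrix.mem_specialUnitaryGroup_iff]
    refine ⟨smul_mem_unitaryGroup (hzc' i) (K i).2, ?_⟩
    rw [Matrix.det_smul, Fintype.card_fin, inv_pow, hz i]
    exact inv_mul_cancel₀ (hdet0 i)
  refine ⟨hmem, ?_⟩
  intro p q
  have hLHS : ∀ i, designMat t (W i) = designMat t ((K i : Matrix (Fin d) (Fin d) ℂ)) := by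
    intro i
    rw [hW i]
    exact designMat_smul t (hzc' i) _
  have hsum : (∑ i : I, (k i : ℂ) • designMat t (W i)) p q =
      (∑ i : I, (k i : ℂ) • designMat t (K i : Matrix (Fin d) (Fin d) ℂ)) p q := by
    simp only [hLHS]
  rw [hsum, hdesign p q]
  -- now the two integrals
  haveI : Nonempty (↥(unitary ℂ) × ↥(Matrix.specialUnitaryGroup (Fin d) ℂ)) := ⟨1⟩
  set μ₀ : Measure (↥(unitary ℂ) × ↥(Matrix.specialUnitaryGroup (Fin d) ℂ)) :=
    Measure.haarMeasure ⊤ with hμ₀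
  haveI : IsProbabilityMeasure μ₀ := by
    constructor
    rw [← TopologicalSpace.PositiveCompacts.coe_top
      (α := ↥(unitary ℂ) × ↥(Matrix.specialUnitaryGroup (Fin d) ℂ))]
    exact Measure.haarMeasure_self
  have hφc : Continuous (rescaleHom d) := rescaleHom_continuous
  have hφs := rescaleHom_surjective hd
  haveI : (μ₀.map (rescaleHom d)).IsHaarMeasure :=
    Measure.isHaarMeasure_map_of_isFiniteMeasure μ₀ (rescaleHom d) hφc hφs
  haveI : IsProbabilityMeasure (μ₀.map (rescaleHom d)) :=
    Measure.isProbabilityMeasure_map hφc.measurable.aemeasurable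
  have hμ : μ = μ₀.map (rescaleHom d) :=
    Measure.isHaarMeasure_eq_of_isProbabilityMeasure _ _
  have hsndc : Continuous
      (MonoidHom.snd ↥(unitary ℂ) ↥(Matrix.specialUnitaryGroup (Fin d) ℂ)) := continuous_snd
  have hsnds : Function.Surjective
      (MonoidHom.snd ↥(unitary ℂ) ↥(Matrix.specialUnitaryGroup (Fin d) ℂ)) :=
    fun S => ⟨(1, S), rfl⟩
  haveI : (μ₀.map (MonoidHom.snd ↥(unitary ℂ)
      ↥(Matrix.specialUnitaryGroup (Fin d) ℂ))).IsHaarMeasure :=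
    Measure.isHaarMeasure_map_of_isFiniteMeasure μ₀ _ hsndc hsnds
  haveI : IsProbabilityMeasure (μ₀.map (MonoidHom.snd ↥(unitary ℂ)
      ↥(Matrix.specialUnitaryGroup (Fin d) ℂ))) :=
    Measure.isProbabilityMeasure_map hsndc.measurable.aemeasurable
  have hν : ν = μ₀.map (MonoidHom.snd ↥(unitary ℂ)
      ↥(Matrix.specialUnitaryGroup (Fin d) ℂ)) :=
    Measure.isHaarMeasure_eq_of_isProbabilityMeasure _ _
  rw [hμ, hν]
  have e1 := integral_map (μ := μ₀) (φ := ⇑(rescaleHom d))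
    (f := fun U : ↥(Matrix.unitaryGroup (Fin d) ℂ) =>
      designMat t (U : Matrix (Fin d) (Fin d) ℂ) p q)
    hφc.measurable.aemeasurable
    (((continuous_designMat_entry t p q).comp continuous_subtype_val).aestronglyMeasurable)
  have e2 := integral_map (μ := μ₀)
    (φ := ⇑(MonoidHom.snd ↥(unitary ℂ) ↥(Matrix.specialUnitaryGroup (Fin d) ℂ)))
    (f := fun V : ↥(Matrix.specialUnitaryGroup (Fin d) ℂ) =>
      designMat t (V : Matrix (Fin d) (Fin d) ℂ) p q)
    hsndc.measurable.aemeasurable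
    (((continuous_designMat_entry t p q).comp continuous_subtype_val).aestronglyMeasurable)
  rw [e1, e2]
  apply integral_congr_ae
  filter_upwards with x
  show designMat t ((rescaleHom d x : Matrix (Fin d) (Fin d) ℂ)) p q =
    designMat t ((x.2 : Matrix (Fin d) (Fin d) ℂ)) p q
  have : ((rescaleHom d x : Matrix (Fin d) (Fin d) ℂ)) =
      (x.1 : ℂ) • (x.2 : Matrix (Fin d) (Fin d) ℂ) := rfl
  rw [this, designMat_smul t (Unitary.mem_iff.mp x.1.2).2]
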